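/- For every nonempty subset I ⊆ [n], the Laurent polynomial Y_I equals the determinant of the principal submatrix 𝒴_I of 𝒴 with row and column indices I: Y_I = det(𝒴_I). -/

import Mathlib

open MvPolynomial

/-- The ambient field: rational functions in the indeterminates `A_1,…,A_n,X_1,…,X_n`. -/
abbrev Kn (n : ℕ) : Type := FractionRing (MvPolynomial (Fin n ⊕ Fin n) ℤ)

/-- The coefficient `A_i`, as an element of the ambient field. -/
noncomputable def AA {n : ℕ} (i : Fin n) : Kn n :=
  algebraMap (MvPolynomial (Fin n ⊕ Fin n) ℤ) (Kn n) (X (Sum.inl i))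

/-- The initial cluster variable `X_i`, as an element of the ambient field. -/
noncomputable def XX {n : ℕ} (i : Fin n) : Kn n :=
  algebraMap (MvPolynomial (Fin n ⊕ Fin n) ℤ) (Kn n) (X (Sum.inr i))

/-- `f` is acyclic on `I`: the only directed cycles in the graph `{i → f(i) : i ∈ I}`
are loops at fixed points. -/
def IsAcyclicOn {n : ℕ} (I : Finset (Fin n)) (f : Fin n → Fin n) : Prop :=
  ∀ i ∈ I, ∀ k : ℕ, 0 < k → (∀ r < k, f^[r] i ∈ I) → f^[k] i = i → f i = i

open Classical in
/-- The numerator `N_I` of `Y_I`: the generating function of acyclic functions `f : I → [n]`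
(encoded as functions `Fin n → Fin n` fixing every vertex outside `I`), where a fixed point
`i ∈ I` contributes `A_i` and a non-fixed point contributes `X_{f i}`. -/
noncomputable def Ynum {n : ℕ} (E : Fin n → Fin n → Prop) (I : Finset (Fin n)) :
    MvPolynomial (Fin n ⊕ Fin n) ℤ :=
  ∑ f : Fin n → Fin n,
    if (∀ i, i ∉ I → f i = i) ∧ (∀ i ∈ I, f i = i ∨ E i (f i)) ∧ IsAcyclicOn I f then
      ∏ i ∈ I, if f i = i then X (Sum.inl i) else X (Sum.inr (f i))
    else 0

/-- The Laurent polynomial `Y_I` (with `Y_∅ = 1`). -/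
noncomputable def YY {n : ℕ} (E : Fin n → Fin n → Prop) (I : Finset (Fin n)) : Kn n :=
  algebraMap (MvPolynomial (Fin n ⊕ Fin n) ℤ) (Kn n) (Ynum E I) / ∏ i ∈ I, XX i

open Classical in
/-- `P_S^{i,j}`: the sum of `Y_{S − p}` over all simple paths `p : i →_S j` in the graph,
whose intermediate vertices lie in `S`.  A path with `m` edges is encoded as an injective
map `v : Fin (m+1) → Fin n` whose consecutive values are edges. -/
noncomputable def PP {n : ℕ} (E : Fin n → Fin n → Prop) (S : Finset (Fin n)) (i j : Fin n) :
    Kn n :=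
  ∑ m ∈ Finset.range (n + 1), ∑ v : Fin (m + 1) → Fin n,
    if Function.Injective v ∧ v 0 = i ∧ v (Fin.last m) = j ∧
        (∀ r : Fin m, E (v r.castSucc) (v r.succ)) ∧
        (∀ r : Fin (m + 1), r ≠ 0 → r ≠ Fin.last m → v r ∈ S) then
      YY E (S \ Finset.image v Finset.univ)
    else 0

open Classical in
/-- The matrix `𝒴`, with diagonal entries `Y_{{i}}`, entries `−1` at edges of the graph,
and `0` elsewhere. -/
noncomputable def Ymat {n : ℕ} (E : Fin n → Fin n → Prop) : Matrix (Fin n) (Fin n) (Kn n) :=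
  Matrix.of fun i j => if i = j then YY E {i} else if E i j then -1 else 0


open Function

variable {n : ℕ}

/-- The vertex set of the `f`-cycle through `m`. -/
noncomputable def cycC (f : Fin n → Fin n) (m : Fin n) : Finset (Fin n) :=
  (Finset.range (minimalPeriod f m)).image (fun r => f^[r] m)

lemma iter_mem_cycC {f : Fin n → Fin n} {m : Fin n} (hm : m ∈ periodicPts f) (r : ℕ) :
    f^[r] m ∈ cycC f m := by
  have hT : 0 < minimalPeriod f m := minimalPeriod_pos_of_mem_periodicPts hm
  refine Finset.mem_image.mpr ⟨r % minimalPeriod f m, Finset.mem_range.mpr (Nat.mod_lt _ hT),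
    iterate_mod_minimalPeriod_eq⟩

lemma mem_cycC_iff {f : Fin n → Fin n} {m : Fin n} (hm : m ∈ periodicPts f) {a : Fin n} :
    a ∈ cycC f m ↔ ∃ r, f^[r] m = a := by
  constructor
  · rintro h
    obtain ⟨r, -, hr⟩ := Finset.mem_image.mp h
    exact ⟨r, hr⟩
  · rintro ⟨r, rfl⟩; exact iter_mem_cycC hm r

lemma cycC_closed {f : Fin n → Fin n} {m : Fin n} (hm : m ∈ periodicPts f) {a : Fin n}
    (ha : a ∈ cycC f m) : f a ∈ cycC f m := by
  obtain ⟨r, rfl⟩ := (mem_cycC_iff hm).mp ha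
  rw [← Function.iterate_succ_apply' f r m]
  exact iter_mem_cycC hm _

lemma cycC_closed_iter {f : Fin n → Fin n} {m : Fin n} (hm : m ∈ periodicPts f) {a : Fin n}
    (ha : a ∈ cycC f m) (s : ℕ) : f^[s] a ∈ cycC f m := by
  induction s with
  | zero => exact ha
  | succ s ih => rw [Function.iterate_succ_apply']; exact cycC_closed hm ih

lemma iterT_cycC {f : Fin n → Fin n} {m : Fin n} (hm : m ∈ periodicPts f) {a : Fin n}
    (ha : a ∈ cycC f m) : f^[minimalPeriod f m] a = a := by
  obtain ⟨r, rfl⟩ := (mem_cycC_iff hm).mp ha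
  rw [← Function.iterate_add_apply, add_comm, Function.iterate_add_apply,
    iterate_minimalPeriod]

/-- The cyclic permutation of `Fin n` supported on the `f`-cycle through the
periodic point `m`. -/
noncomputable def cpm (f : Fin n → Fin n) (m : Fin n) (hm : m ∈ periodicPts f) : Equiv.Perm (Fin n) where
  toFun a := if a ∈ cycC f m then f a else a
  invFun a := if a ∈ cycC f m then f^[minimalPeriod f m - 1] a else a
  left_inv := by
    intro a
    by_cases ha : a ∈ cycC f m
    · have hT : 0 < minimalPeriod f m := minimalPeriod_pos_of_mem_periodicPts hm
      simp only [ha, if_pos, cycC_closed hm ha, if_pos]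
      calc f^[minimalPeriod f m - 1] (f a) = f^[minimalPeriod f m - 1 + 1] a :=
            (Function.iterate_succ_apply f _ a).symm
        _ = a := by rw [Nat.sub_add_cancel hT]; exact iterT_cycC hm ha
    · simp [ha]
  right_inv := by
    intro a
    by_cases ha : a ∈ cycC f m
    · have hT : 0 < minimalPeriod f m := minimalPeriod_pos_of_mem_periodicPts hm
      simp only [ha, if_pos, cycC_closed_iter hm ha _, if_pos]
      calc f (f^[minimalPeriod f m - 1] a) = f^[minimalPeriod f m - 1 + 1] a :=
            (Function.iterate_succ_apply' f _ a).symm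
        _ = a := by rw [Nat.sub_add_cancel hT]; exact iterT_cycC hm ha
    · simp [ha]

lemma cpm_apply {f : Fin n → Fin n} {m : Fin n} (hm : m ∈ periodicPts f) (a : Fin n) :
    cpm f m hm a = if a ∈ cycC f m then f a else a := rfl

lemma cpm_inv_apply {f : Fin n → Fin n} {m : Fin n} (hm : m ∈ periodicPts f) (a : Fin n) :
    (cpm f m hm)⁻¹ a = if a ∈ cycC f m then f^[minimalPeriod f m - 1] a else a := rfl

lemma cycC_nonfix {f : Fin n → Fin n} {m : Fin n} (hm : m ∈ periodicPts f) (hne : f m ≠ m)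
    {a : Fin n} (ha : a ∈ cycC f m) : f a ≠ a := by
  obtain ⟨r, rfl⟩ := (mem_cycC_iff hm).mp ha
  intro hfix
  have hfp : IsFixedPt f (f^[r] m) := hfix
  have h1 : f^[minimalPeriod f m] (f^[r] m) = f^[r] m := hfp.iterate _
  have h2 : f^[minimalPeriod f m] (f^[r] m) = f^[r] m := iterT_cycC hm ha
  -- show m = f^[r] m
  have key : ∀ s, f^[r + s] m = f^[r] m := by
    intro s
    rw [add_comm, Function.iterate_add_apply]
    exact hfp.iterate s
  have hT : 0 < minimalPeriod f m := minimalPeriod_pos_of_mem_periodicPts hm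
  have hrT : r + (minimalPeriod f m * (r + 1) - r) = minimalPeriod f m * (r + 1) := by
    have : r ≤ minimalPeriod f m * (r + 1) := by nlinarith
    omega
  have hmult : f^[minimalPeriod f m * (r + 1)] m = m := by
    rw [Function.iterate_mul]
    exact (isPeriodicPt_minimalPeriod f m).isFixedPt.iterate _
  have h3 : f^[r + (minimalPeriod f m * (r + 1) - r)] m = f^[r] m := key _
  rw [hrT, hmult] at h3
  rw [← h3] at hfix
  exact hne hfix

lemma cpm_support {f : Fin n → Fin n} {m : Fin n} (hm : m ∈ periodicPts f) (hne : f m ≠ m) :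
    (cpm f m hm).support = cycC f m := by
  ext a
  rw [Equiv.Perm.mem_support, cpm_apply]
  by_cases ha : a ∈ cycC f m
  · simp [ha, cycC_nonfix hm hne ha]
  · simp [ha]

lemma cycC_card {f : Fin n → Fin n} {m : Fin n} :
    (cycC f m).card = minimalPeriod f m := by
  rw [cycC, Finset.card_image_of_injOn, Finset.card_range]
  intro a ha b hb hab
  exact iterate_injOn_Iio_minimalPeriod (by simpa using ha) (by simpa using hb) hab

lemma cpm_pow {f : Fin n → Fin n} {m : Fin n} (hm : m ∈ periodicPts f) (r : ℕ) :
    (cpm f m hm ^ r) m = f^[r] m := by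
  induction r with
  | zero => rfl
  | succ r ih =>
    rw [pow_succ', Equiv.Perm.mul_apply, ih, cpm_apply, if_pos (iter_mem_cycC hm r),
      Function.iterate_succ_apply']

lemma cpm_isCycle {f : Fin n → Fin n} {m : Fin n} (hm : m ∈ periodicPts f) (hne : f m ≠ m) :
    (cpm f m hm).IsCycle := by
  refine ⟨m, ?_, ?_⟩
  · rw [cpm_apply, if_pos]
    · exact hne
    · simpa using iter_mem_cycC hm 0
  · intro y hy
    have hyC : y ∈ cycC f m := by
      by_contra h
      rw [cpm_apply, if_neg h] at hy
      exact hy rfl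
    obtain ⟨r, rfl⟩ := (mem_cycC_iff hm).mp hyC
    exact ⟨(r : ℤ), by rw [zpow_natCast, cpm_pow]⟩

lemma cpm_sign {f : Fin n → Fin n} {m : Fin n} (hm : m ∈ periodicPts f) (hne : f m ≠ m) :
    Equiv.Perm.sign (cpm f m hm) = -(-1) ^ minimalPeriod f m := by
  rw [(cpm_isCycle hm hne).sign, cpm_support hm hne, cycC_card]

variable {n : ℕ}

abbrev Rn (n : ℕ) : Type := MvPolynomial (Fin n ⊕ Fin n) ℤ

open Classical in
noncomputable def ee (E : Fin n → Fin n → Prop) (a j : Fin n) : Rn n :=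
  if j = a then X (Sum.inl a) else if E a j then X (Sum.inr j) else 0

open Classical in
noncomputable def DD (E : Fin n → Fin n → Prop) (a : Fin n) : Rn n :=
  X (Sum.inl a) + ∑ j ∈ Finset.univ.filter (fun j => E a j), X (Sum.inr j)

open Classical in
noncomputable def Nmat (E : Fin n → Fin n → Prop) (I : Finset (Fin n)) :
    Matrix (Fin n) (Fin n) (Rn n) :=
  Matrix.of fun a b =>
    if a = b then (if a ∈ I then DD E a else 1)
    else if a ∈ I ∧ b ∈ I ∧ E a b then -X (Sum.inr b) else 0

def Cond (I : Finset (Fin n)) (p : Equiv.Perm (Fin n) × (Fin n → Fin n)) : Prop :=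
  (∀ a, a ∉ I → p.1 a = a) ∧ (∀ a, p.1 a ≠ a → p.2 a = p.1 a) ∧ (∀ a, a ∉ I → p.2 a = a)

noncomputable def wZ (σ : Equiv.Perm (Fin n)) : ℤ :=
  (Equiv.Perm.sign σ : ℤ) * (-1) ^ σ.support.card

open Classical in
noncomputable def Wt (E : Fin n → Fin n → Prop) (I : Finset (Fin n))
    (p : Equiv.Perm (Fin n) × (Fin n → Fin n)) : Rn n :=
  if Cond I p then (wZ p.1 : Rn n) * ∏ a ∈ I, ee E a (p.2 a) else 0

open Classical in
noncomputable def uu (E : Fin n → Fin n → Prop) (I : Finset (Fin n)) (σ : Equiv.Perm (Fin n))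
    (a j : Fin n) : Rn n :=
  if a ∈ I then (if σ a = a then ee E a j else if j = σ a then -ee E a (σ a) else 0)
  else (if j = a then 1 else 0)

lemma sum_ee (E : Fin n → Fin n → Prop) (a : Fin n) (hEa : ¬ E a a) :
    ∑ j, ee E a j = DD E a := by
  classical
  rw [← Finset.add_sum_erase _ _ (Finset.mem_univ a)]
  have h1 : ee E a a = X (Sum.inl a) := by rw [ee, if_pos rfl]
  have h2 : ∑ j ∈ Finset.univ.erase a, ee E a j
      = ∑ j ∈ Finset.univ.filter (fun j => E a j), X (Sum.inr j) := by
    have hstep : ∑ j ∈ Finset.univ.erase a, ee E a j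
        = ∑ j ∈ Finset.univ.erase a, (if E a j then X (Sum.inr j) else (0 : Rn n)) := by
      refine Finset.sum_congr rfl fun j hj => ?_
      have hja : j ≠ a := (Finset.mem_erase.mp hj).1
      rw [ee, if_neg hja]
    rw [hstep, ← Finset.sum_filter]
    have hset : (Finset.univ.erase a).filter (fun j => E a j)
        = Finset.univ.filter (fun j => E a j) := by
      ext j
      simp only [Finset.mem_filter, Finset.mem_erase, Finset.mem_univ, true_and, and_true]
      constructor
      · rintro ⟨-, hj⟩; exact hj
      · intro hj; exact ⟨fun hja => hEa (hja ▸ hj), hj⟩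
    rw [hset]
  rw [h1, h2, DD]

lemma support_subset_of_fix {σ : Equiv.Perm (Fin n)} {I : Finset (Fin n)}
    (h : ∀ a, a ∉ I → σ a = a) : σ.support ⊆ I := by
  intro a ha
  by_contra hI
  exact (Equiv.Perm.mem_support.mp ha) (h a hI)

lemma filter_eq_support {σ : Equiv.Perm (Fin n)} {I : Finset (Fin n)}
    (h : ∀ a, a ∉ I → σ a = a) :
    I.filter (fun a => ¬ σ a = a) = σ.support := by
  classical
  ext a
  simp only [Finset.mem_filter, Equiv.Perm.mem_support]
  constructor
  · rintro ⟨-, h2⟩; exact h2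
  · intro h2
    refine ⟨?_, h2⟩
    by_contra hI
    exact h2 (h a hI)
open Matrix

section DetExpand

variable {E : Fin n → Fin n → Prop} {I : Finset (Fin n)}

lemma Nmat_entry_eq_sum_uu (hE : ∀ i, ¬ E i i) {σ : Equiv.Perm (Fin n)}
    (hσ : ∀ a, a ∉ I → σ a = a) (a : Fin n) :
    Nmat E I a (σ a) = ∑ j, uu E I σ a j := by
  classical
  by_cases haI : a ∈ I
  · by_cases hfix : σ a = a
    · have : ∑ j, uu E I σ a j = ∑ j, ee E a j := by
        refine Finset.sum_congr rfl fun j _ => ?_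
        rw [uu, if_pos haI, if_pos hfix]
      rw [this, sum_ee E a (hE a), Nmat]
      simp only [Matrix.of_apply, hfix, if_pos rfl, if_pos haI]
      simp
    · have hsum : ∑ j, uu E I σ a j = -ee E a (σ a) := by
        have : ∀ j, uu E I σ a j = if j = σ a then -ee E a (σ a) else 0 := by
          intro j; rw [uu, if_pos haI, if_neg hfix]
        rw [Finset.sum_congr rfl fun j _ => this j, Finset.sum_ite_eq' Finset.univ (σ a),
          if_pos (Finset.mem_univ _)]
      rw [hsum]
      have hne : a ≠ σ a := fun h => hfix h.symm
      have hσaI : σ a ∈ I := by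
        by_contra hc
        exact hfix (σ.injective (by rw [hσ (σ a) hc]))
      rw [Nmat]
      simp only [Matrix.of_apply, if_neg hne]
      by_cases hEa : E a (σ a)
      · rw [if_pos ⟨haI, hσaI, hEa⟩, ee, if_neg (fun h : σ a = a => hfix h), if_pos hEa]
      · rw [if_neg (by tauto), ee, if_neg (fun h : σ a = a => hfix h), if_neg hEa, neg_zero]
  · have hfix : σ a = a := hσ a haI
    have : ∑ j, uu E I σ a j = ∑ j, if j = a then (1 : Rn n) else 0 := by
      refine Finset.sum_congr rfl fun j _ => ?_
      rw [uu, if_neg haI]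
    rw [this, Finset.sum_ite_eq' Finset.univ a, if_pos (Finset.mem_univ _), Nmat]
    simp only [Matrix.of_apply, hfix, if_pos rfl, if_neg haI]
    simp

lemma smul_prod_uu_eq_Wt (hE : ∀ i, ¬ E i i) {σ : Equiv.Perm (Fin n)}
    (hσ : ∀ a, a ∉ I → σ a = a) (g : Fin n → Fin n) :
    Equiv.Perm.sign σ • ∏ i, uu E I σ i (g i) = Wt E I (σ, g) := by
  classical
  by_cases hc : Cond I (σ, g)
  · obtain ⟨-, hc2, hc3⟩ := hc
    have hprodI : ∏ i, uu E I σ i (g i) = ∏ a ∈ I, uu E I σ a (g a) := by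
      refine (Finset.prod_subset (Finset.subset_univ I) ?_).symm
      intro a _ haI
      rw [uu, if_neg haI, if_pos (hc3 a haI)]
    have hterm : ∀ a ∈ I, uu E I σ a (g a)
        = (if σ a = a then (1 : Rn n) else -1) * ee E a (g a) := by
      intro a haI
      rw [uu, if_pos haI]
      by_cases hfix : σ a = a
      · rw [if_pos hfix, if_pos hfix, one_mul]
      · have hga : g a = σ a := hc2 a hfix
        rw [if_neg hfix, if_neg hfix, if_pos hga, hga, neg_one_mul]
    have hsign : ∏ a ∈ I, (if σ a = a then (1 : Rn n) else -1)
        = (-1) ^ σ.support.card := by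
      rw [Finset.prod_ite (fun _ => (1:Rn n)) (fun _ => (-1:Rn n)), Finset.prod_const_one,
        one_mul, Finset.prod_const, filter_eq_support hσ]
    rw [hprodI, Finset.prod_congr rfl hterm, Finset.prod_mul_distrib, hsign, Wt,
      if_pos ⟨hσ, hc2, hc3⟩]
    show _ • ((-1:Rn n) ^ σ.support.card * _) = _
    rw [Units.smul_def, zsmul_eq_mul, wZ]
    push_cast
    ring
  · rw [Wt, if_neg hc]
    have : ∃ a, (σ a ≠ a ∧ g a ≠ σ a) ∨ (a ∉ I ∧ g a ≠ a) := by
      by_contra hcon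
      push_neg at hcon
      exact hc ⟨hσ, fun a ha => (hcon a).1 ha, fun a ha => (hcon a).2 ha⟩
    obtain ⟨a, ha⟩ := this
    have hz : uu E I σ a (g a) = 0 := by
      rcases ha with ⟨h1, h2⟩ | ⟨h1, h2⟩
      · have haI : a ∈ I := by
          by_contra hc'
          exact h1 (hσ a hc')
        rw [uu, if_pos haI, if_neg h1, if_neg h2]
      · rw [uu, if_neg h1, if_neg h2]
    rw [Finset.prod_eq_zero (Finset.mem_univ a) hz, smul_zero]

lemma det_Nmat_eq_sum_Wt (hE : ∀ i, ¬ E i i) :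
    (Nmat E I).det = ∑ p : Equiv.Perm (Fin n) × (Fin n → Fin n), Wt E I p := by
  classical
  rw [Fintype.sum_prod_type, ← Matrix.det_transpose, Matrix.det_apply]
  refine Finset.sum_congr rfl fun σ _ => ?_
  by_cases hσ : ∀ a, a ∉ I → σ a = a
  · have h1 : ∏ i, (Nmat E I)ᵀ (σ i) i = ∑ g : Fin n → Fin n, ∏ i, uu E I σ i (g i) := by
      have : ∀ i, (Nmat E I)ᵀ (σ i) i = ∑ j, uu E I σ i j := fun i =>
        Nmat_entry_eq_sum_uu hE hσ i
      rw [Finset.prod_congr rfl fun i _ => this i, Finset.prod_univ_sum,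
        Fintype.piFinset_univ]
    rw [h1, Finset.smul_sum]
    exact Finset.sum_congr rfl fun g _ => smul_prod_uu_eq_Wt hE hσ g
  · push_neg at hσ
    obtain ⟨a, haI, hne⟩ := hσ
    have hz : (Nmat E I)ᵀ (σ a) a = 0 := by
      show Nmat E I a (σ a) = 0
      rw [Nmat]
      simp only [Matrix.of_apply]
      rw [if_neg (fun h => hne h.symm), if_neg (by tauto)]
    rw [Finset.prod_eq_zero (f := fun i => (Nmat E I)ᵀ (σ i) i) (Finset.mem_univ a) hz,
      smul_zero]
    refine (Finset.sum_eq_zero fun g _ => ?_).symm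
    rw [Wt, if_neg (fun hc => hne (hc.1 a haI))]

lemma stuck_iterate {f : Fin n → Fin n} {x : Fin n} {r k : ℕ}
    (h : Function.IsFixedPt f (f^[r] x)) (hk : 0 < k) (hper : f^[k] x = x) :
    f^[r] x = x := by
  have hmult : f^[k * (r + 1)] x = x := by
    rw [Function.iterate_mul]
    exact (show Function.IsPeriodicPt f k x from hper).isFixedPt.iterate _
  have hle : r ≤ k * (r + 1) := by nlinarith
  have : f^[(k * (r + 1) - r) + r] x = f^[r] x := by
    rw [Function.iterate_add_apply]
    exact h.iterate _
  rw [Nat.sub_add_cancel hle, hmult] at this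
  exact this.symm

lemma acyclic_iff_no_bad {f : Fin n → Fin n} {I : Finset (Fin n)}
    (hid : ∀ a, a ∉ I → f a = a) :
    IsAcyclicOn I f ↔ ∀ i, f i ≠ i → i ∉ periodicPts f := by
  constructor
  · intro hac i hfi hper
    obtain ⟨k, hk, hpk⟩ := hper
    have hiI : i ∈ I := by
      by_contra h; exact hfi (hid i h)
    have hiter : ∀ r < k, f^[r] i ∈ I := by
      intro r hr
      by_contra h
      have hfix : Function.IsFixedPt f (f^[r] i) := hid _ h
      have := stuck_iterate hfix hk hpk
      rw [this] at h
      exact h hiI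
    exact hfi (hac i hiI k hk hiter hpk)
  · intro hnb i hiI k hk hiter hpk
    by_contra hfi
    exact hnb i hfi (Function.mk_mem_periodicPts hk hpk)

lemma bad_of_ne_one {σ : Equiv.Perm (Fin n)} {f : Fin n → Fin n} {I : Finset (Fin n)}
    (hc : Cond I (σ, f)) (hσ : σ ≠ 1) :
    ∃ i, f i ≠ i ∧ i ∈ periodicPts f := by
  obtain ⟨-, hc2, -⟩ := hc
  have : ∃ a, σ a ≠ a := by
    by_contra h
    push_neg at h
    exact hσ (Equiv.ext h)
  obtain ⟨a, ha⟩ := this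
  have key : ∀ r : ℕ, f^[r] a = (σ ^ r) a ∧ σ ((σ ^ r) a) ≠ (σ ^ r) a := by
    intro r
    induction r with
    | zero => exact ⟨rfl, ha⟩
    | succ r ih =>
      obtain ⟨h1, h2⟩ := ih
      have hstep : f^[r + 1] a = (σ ^ (r + 1)) a := by
        rw [Function.iterate_succ_apply', h1, pow_succ', Equiv.Perm.mul_apply]
        exact hc2 _ h2
      refine ⟨hstep, ?_⟩
      have : (σ ^ (r + 1)) (σ a) ≠ (σ ^ (r + 1)) a := fun h => ha ((σ ^ (r + 1)).injective h)
      have hcomm : (σ ^ (r + 1)) (σ a) = σ ((σ ^ (r + 1)) a) := by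
        rw [← Equiv.Perm.mul_apply, ← Equiv.Perm.mul_apply, ← pow_succ, ← pow_succ']
      rw [hcomm] at this
      exact this
  refine ⟨a, ?_, ?_⟩
  · have := (key 1).1
    simp only [Function.iterate_one, pow_one] at this
    rw [this]
    exact ha
  · refine Function.mk_mem_periodicPts (orderOf_pos σ) ?_
    show f^[orderOf σ] a = a
    rw [(key (orderOf σ)).1, pow_orderOf_eq_one]
    simp

open Classical in
noncomputable def badSet (f : Fin n → Fin n) : Finset (Fin n) :=
  Finset.univ.filter (fun i => f i ≠ i ∧ i ∈ periodicPts f)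

lemma badSet_mem {f : Fin n → Fin n} {i : Fin n} :
    i ∈ badSet f ↔ f i ≠ i ∧ i ∈ periodicPts f := by
  classical
  simp [badSet]

open Classical in
/-- The sign-reversing involution: toggle the canonical cycle of `p.2`. -/
noncomputable def iot (p : Equiv.Perm (Fin n) × (Fin n → Fin n)) :
    Equiv.Perm (Fin n) × (Fin n → Fin n) :=
  if h : (badSet p.2).Nonempty then
    have hm : (badSet p.2).min' h ∈ periodicPts p.2 :=
      (badSet_mem.mp ((badSet p.2).min'_mem h)).2
    (p.1 * (if p.1 ((badSet p.2).min' h) = (badSet p.2).min' h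
        then cpm p.2 ((badSet p.2).min' h) hm else (cpm p.2 ((badSet p.2).min' h) hm)⁻¹),
      p.2)
  else p

section Involution

variable {f : Fin n → Fin n} {m : Fin n} {σ : Equiv.Perm (Fin n)} {I : Finset (Fin n)}

lemma mem_cycC_iff' (hm : m ∈ periodicPts f) {a : Fin n} :
    a ∈ cycC f m ↔ ∃ r < minimalPeriod f m, f^[r] m = a := by
  rw [cycC]
  simp only [Finset.mem_image, Finset.mem_range]

lemma nonfix_chain (hc2 : ∀ a, σ a ≠ a → f a = σ a) {a : Fin n} (ha : σ a ≠ a) :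
    ∀ s : ℕ, σ (f^[s] a) ≠ f^[s] a := by
  intro s
  induction s with
  | zero => exact ha
  | succ s ih =>
    rw [Function.iterate_succ_apply', hc2 _ ih]
    intro h
    exact ih (σ.injective h)

lemma unmk_fix (hm : m ∈ periodicPts f) (hc2 : ∀ a, σ a ≠ a → f a = σ a)
    (hσm : σ m = m) : ∀ a ∈ cycC f m, σ a = a := by
  intro a haC
  by_contra hna
  obtain ⟨r, hrT, rfl⟩ := (mem_cycC_iff' hm).mp haC
  have key := nonfix_chain hc2 hna (minimalPeriod f m - r)
  rw [← Function.iterate_add_apply, Nat.sub_add_cancel (le_of_lt hrT),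
    iterate_minimalPeriod] at key
  exact key hσm

lemma mk_nonfix (hm : m ∈ periodicPts f) (hc2 : ∀ a, σ a ≠ a → f a = σ a)
    (hσm : σ m ≠ m) : ∀ a ∈ cycC f m, σ a ≠ a := by
  intro a haC
  obtain ⟨r, -, rfl⟩ := (mem_cycC_iff' hm).mp haC
  exact nonfix_chain hc2 hσm r

lemma mul_cpm_apply (hm : m ∈ periodicPts f) (hfixC : ∀ a ∈ cycC f m, σ a = a) (a : Fin n) :
    (σ * cpm f m hm) a = if a ∈ cycC f m then f a else σ a := by
  rw [Equiv.Perm.mul_apply, cpm_apply]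
  by_cases haC : a ∈ cycC f m
  · rw [if_pos haC, if_pos haC, hfixC _ (cycC_closed hm haC)]
  · rw [if_neg haC, if_neg haC]

lemma mul_cpm_inv_apply (hm : m ∈ periodicPts f) (hnfC : ∀ a ∈ cycC f m, σ a ≠ a)
    (hc2 : ∀ a, σ a ≠ a → f a = σ a) (a : Fin n) :
    (σ * (cpm f m hm)⁻¹) a = if a ∈ cycC f m then a else σ a := by
  rw [Equiv.Perm.mul_apply, cpm_inv_apply]
  by_cases haC : a ∈ cycC f m
  · rw [if_pos haC, if_pos haC]
    have hT : 0 < minimalPeriod f m := minimalPeriod_pos_of_mem_periodicPts hm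
    have hmem : f^[minimalPeriod f m - 1] a ∈ cycC f m := cycC_closed_iter hm haC _
    rw [← hc2 _ (hnfC _ hmem)]
    calc f (f^[minimalPeriod f m - 1] a) = f^[minimalPeriod f m - 1 + 1] a :=
          (Function.iterate_succ_apply' f _ a).symm
      _ = a := by rw [Nat.sub_add_cancel hT]; exact iterT_cycC hm haC
  · rw [if_neg haC, if_neg haC]

lemma support_mul_cpm (hm : m ∈ periodicPts f) (hne : f m ≠ m)
    (hfixC : ∀ a ∈ cycC f m, σ a = a) :
    (σ * cpm f m hm).support = σ.support ∪ cycC f m := by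
  ext a
  rw [Equiv.Perm.mem_support, mul_cpm_apply hm hfixC, Finset.mem_union,
    Equiv.Perm.mem_support]
  by_cases haC : a ∈ cycC f m
  · simp [haC, cycC_nonfix hm hne haC]
  · simp [haC]

lemma support_mul_cpm_inv (hm : m ∈ periodicPts f) (hnfC : ∀ a ∈ cycC f m, σ a ≠ a)
    (hc2 : ∀ a, σ a ≠ a → f a = σ a) :
    (σ * (cpm f m hm)⁻¹).support = σ.support \ cycC f m := by
  ext a
  rw [Equiv.Perm.mem_support, mul_cpm_inv_apply hm hnfC hc2, Finset.mem_sdiff,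
    Equiv.Perm.mem_support]
  by_cases haC : a ∈ cycC f m
  · simp [haC]
  · simp [haC]

lemma neg_one_sq_pow (T : ℕ) : ((-1 : ℤ) ^ T) * ((-1) ^ T) = 1 := by
  rw [← pow_add]
  exact Even.neg_one_pow ⟨T, rfl⟩

lemma wZ_mul_cpm (hm : m ∈ periodicPts f) (hne : f m ≠ m)
    (hfixC : ∀ a ∈ cycC f m, σ a = a) :
    wZ (σ * cpm f m hm) = -wZ σ := by
  classical
  have hdisj : Disjoint σ.support (cycC f m) := by
    rw [Finset.disjoint_right]
    intro a haC
    rw [Equiv.Perm.mem_support, not_not]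
    exact hfixC a haC
  rw [wZ, wZ, _root_.map_mul, support_mul_cpm hm hne hfixC,
    Finset.card_union_of_disjoint hdisj, cpm_sign hm hne, cycC_card]
  push_cast [Units.val_mul, Units.val_neg, Units.val_pow_eq_pow_val, Units.val_one]
  rw [pow_add]
  have h1 := neg_one_sq_pow (minimalPeriod f m)
  linear_combination (-(Equiv.Perm.sign σ : ℤ) * (-1 : ℤ) ^ σ.support.card) * h1

lemma wZ_mul_cpm_inv (hm : m ∈ periodicPts f) (hne : f m ≠ m)
    (hnfC : ∀ a ∈ cycC f m, σ a ≠ a) (hc2 : ∀ a, σ a ≠ a → f a = σ a) :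
    wZ (σ * (cpm f m hm)⁻¹) = -wZ σ := by
  classical
  have hsub : cycC f m ⊆ σ.support := by
    intro a haC
    rw [Equiv.Perm.mem_support]
    exact hnfC a haC
  have hTle : minimalPeriod f m ≤ σ.support.card := by
    rw [← cycC_card (f := f) (m := m)]
    exact Finset.card_le_card hsub
  rw [wZ, wZ, _root_.map_mul, Equiv.Perm.sign_inv, support_mul_cpm_inv hm hnfC hc2,
    Finset.card_sdiff_of_subset hsub, cpm_sign hm hne, cycC_card]
  push_cast [Units.val_mul, Units.val_neg, Units.val_pow_eq_pow_val, Units.val_one]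
  have h3 : (-1 : ℤ) ^ (σ.support.card - minimalPeriod f m) * (-1) ^ minimalPeriod f m
      = (-1) ^ σ.support.card := by
    rw [← pow_add, Nat.sub_add_cancel hTle]
  linear_combination (-(Equiv.Perm.sign σ : ℤ)) * h3

end Involution

section InvolutionMain

variable {I : Finset (Fin n)} {E : Fin n → Fin n → Prop}

lemma iot_main {p : Equiv.Perm (Fin n) × (Fin n → Fin n)}
    (hc : Cond I p) (hb : (badSet p.2).Nonempty) :
    Cond I (iot p) ∧ (iot p).2 = p.2 ∧ wZ (iot p).1 = -wZ p.1 ∧ iot (iot p) = p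
      ∧ iot p ≠ p := by
  classical
  obtain ⟨σ, f⟩ := p
  obtain ⟨hc1, hc2, hc3⟩ := hc
  simp only at hc1 hc2 hc3 hb
  have hmB : (badSet f).min' hb ∈ badSet f := Finset.min'_mem _ hb
  set m := (badSet f).min' hb with hmdef
  have hm : m ∈ periodicPts f := (badSet_mem.mp hmB).2
  have hne : f m ≠ m := (badSet_mem.mp hmB).1
  have hmC : m ∈ cycC f m := by
    have := iter_mem_cycC hm 0
    simpa using this
  have hCsubI : ∀ a ∈ cycC f m, a ∈ I := by
    intro a ha
    by_contra haI
    exact cycC_nonfix hm hne ha (hc3 a haI)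
  have hiot : iot (σ, f)
      = (σ * (if σ m = m then cpm f m hm else (cpm f m hm)⁻¹), f) := by
    rw [iot, dif_pos hb]
  by_cases hσm : σ m = m
  · -- unmarked case : add the cycle
    have hfixC := unmk_fix hm hc2 hσm
    have happly := mul_cpm_apply hm hfixC
    rw [if_pos hσm] at hiot
    set σ' := σ * cpm f m hm with hσ'def
    have hσ'm : σ' m = f m := by rw [happly m, if_pos hmC]
    have hcond' : Cond I (σ', f) := by
      refine ⟨?_, ?_, hc3⟩
      · intro a haI
        rw [happly a, if_neg (fun hC => haI (hCsubI a hC))]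
        exact hc1 a haI
      · intro a ha
        rw [happly a] at ha ⊢
        by_cases haC : a ∈ cycC f m
        · rw [if_pos haC]
        · rw [if_neg haC] at ha ⊢
          exact hc2 a ha
    refine ⟨by rw [hiot]; exact hcond', by rw [hiot], ?_, ?_, ?_⟩
    · rw [hiot]
      exact wZ_mul_cpm hm hne hfixC
    · rw [hiot]
      rw [show iot (σ', f)
          = (σ' * (if σ' m = m then cpm f m hm else (cpm f m hm)⁻¹), f) from by
        rw [iot, dif_pos (show (badSet (σ', f).2).Nonempty from hb)]]
      rw [if_neg (show σ' m ≠ m from by rw [hσ'm]; exact hne), mul_inv_cancel_right]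
    · rw [hiot]
      intro h
      have := congrArg (fun q => q.1 m) h
      simp only at this
      rw [hσ'm] at this
      exact hne (this.trans hσm)
  · -- marked case : remove the cycle
    have hnfC := mk_nonfix hm hc2 hσm
    have happly := mul_cpm_inv_apply hm hnfC hc2
    rw [if_neg hσm] at hiot
    set σ' := σ * (cpm f m hm)⁻¹ with hσ'def
    have hσ'm : σ' m = m := by rw [happly m, if_pos hmC]
    have hcond' : Cond I (σ', f) := by
      refine ⟨?_, ?_, hc3⟩
      · intro a haI
        rw [happly a, if_neg (fun hC => haI (hCsubI a hC))]
        exact hc1 a haI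
      · intro a ha
        rw [happly a] at ha ⊢
        by_cases haC : a ∈ cycC f m
        · rw [if_pos haC] at ha
          exact absurd rfl ha
        · rw [if_neg haC] at ha ⊢
          exact hc2 a ha
    refine ⟨by rw [hiot]; exact hcond', by rw [hiot], ?_, ?_, ?_⟩
    · rw [hiot]
      exact wZ_mul_cpm_inv hm hne hnfC hc2
    · rw [hiot]
      rw [show iot (σ', f)
          = (σ' * (if σ' m = m then cpm f m hm else (cpm f m hm)⁻¹), f) from by
        rw [iot, dif_pos (show (badSet (σ', f).2).Nonempty from hb)]]
      rw [if_pos hσ'm, inv_mul_cancel_right]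
    · rw [hiot]
      intro h
      have := congrArg (fun q => q.1 m) h
      simp only at this
      rw [hσ'm] at this
      exact hσm this.symm

end InvolutionMain

section MainSum

variable {I : Finset (Fin n)} {E : Fin n → Fin n → Prop}

lemma Wt_iot_neg {p : Equiv.Perm (Fin n) × (Fin n → Fin n)}
    (hc : Cond I p) (hb : (badSet p.2).Nonempty) :
    Wt E I p + Wt E I (iot p) = 0 := by
  obtain ⟨h1, h2, h3, -, -⟩ := iot_main (I := I) hc hb
  rw [Wt, if_pos hc, Wt, if_pos h1, h2, h3]
  push_cast
  ring

open Classical in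
lemma sum_bad :
    ∑ p ∈ (Finset.univ.filter (fun p : Equiv.Perm (Fin n) × (Fin n → Fin n) => Cond I p)).filter
      (fun p => ¬(p.1 = 1 ∧ ¬(badSet p.2).Nonempty)), Wt E I p = 0 := by
  classical
  have hmem : ∀ p, p ∈ (Finset.univ.filter
        (fun p : Equiv.Perm (Fin n) × (Fin n → Fin n) => Cond I p)).filter
        (fun p => ¬(p.1 = 1 ∧ ¬(badSet p.2).Nonempty)) →
      Cond I p ∧ (badSet p.2).Nonempty := by
    intro p hp
    rw [Finset.mem_filter, Finset.mem_filter] at hp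
    obtain ⟨⟨-, hcond⟩, hng⟩ := hp
    refine ⟨hcond, ?_⟩
    by_cases h1 : p.1 = 1
    · by_contra hnb
      exact hng ⟨h1, hnb⟩
    · obtain ⟨i, hi1, hi2⟩ := bad_of_ne_one (I := I) (σ := p.1) (f := p.2) hcond h1
      exact ⟨i, badSet_mem.mpr ⟨hi1, hi2⟩⟩
  refine Finset.sum_involution (fun p _ => iot p) ?_ ?_ ?_ ?_
  · intro p hp
    obtain ⟨hcond, hb⟩ := hmem p hp
    exact Wt_iot_neg hcond hb
  · intro p hp _
    obtain ⟨hcond, hb⟩ := hmem p hp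
    exact (iot_main (I := I) hcond hb).2.2.2.2
  · intro p hp
    obtain ⟨hcond, hb⟩ := hmem p hp
    obtain ⟨h1, h2, -, -, -⟩ := iot_main (I := I) hcond hb
    rw [Finset.mem_filter, Finset.mem_filter]
    refine ⟨⟨Finset.mem_univ _, h1⟩, ?_⟩
    rintro ⟨-, hnb⟩
    rw [h2] at hnb
    exact hnb hb
  · intro p hp
    obtain ⟨hcond, hb⟩ := hmem p hp
    exact (iot_main (I := I) hcond hb).2.2.2.1

open Classical in
lemma pair_term_eq (σ : Equiv.Perm (Fin n)) (g : Fin n → Fin n) :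
    (if Cond I (σ, g) then
        (if σ = 1 ∧ ¬(badSet g).Nonempty then Wt E I (σ, g) else 0) else 0)
      = if σ = 1 then
          (if (∀ i, i ∉ I → g i = i) ∧ (∀ i ∈ I, g i = i ∨ E i (g i)) ∧ IsAcyclicOn I g then
            ∏ i ∈ I, if g i = i then X (Sum.inl i) else X (Sum.inr (g i))
          else 0)
        else 0 := by
  classical
  by_cases hσ1 : σ = 1
  · subst hσ1
    rw [if_pos rfl]
    by_cases h3 : ∀ a, a ∉ I → g a = a
    · have hcond : Cond I (1, g) := ⟨fun a _ => rfl, fun a ha => absurd rfl ha, h3⟩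
      rw [if_pos hcond]
      by_cases hNB : (badSet g).Nonempty
      · rw [if_neg (fun h => h.2 hNB)]
        have hnac : ¬ IsAcyclicOn I g := by
          obtain ⟨i, hi⟩ := hNB
          obtain ⟨hi1, hi2⟩ := badSet_mem.mp hi
          intro hac
          exact (acyclic_iff_no_bad h3).mp hac i hi1 hi2
        rw [if_neg (fun h => hnac h.2.2)]
      · have hac : IsAcyclicOn I g := (acyclic_iff_no_bad h3).mpr
          (fun i hgi hper => hNB ⟨i, badSet_mem.mpr ⟨hgi, hper⟩⟩)
        rw [if_pos ⟨rfl, hNB⟩, Wt, if_pos hcond]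
        have hwz : wZ (1 : Equiv.Perm (Fin n)) = 1 := by simp [wZ]
        rw [hwz, Int.cast_one, one_mul]
        by_cases hedge : ∀ i ∈ I, g i = i ∨ E i (g i)
        · rw [if_pos ⟨h3, hedge, hac⟩]
          refine Finset.prod_congr rfl fun i hi => ?_
          by_cases hfix : g i = i
          · rw [ee, if_pos hfix, if_pos hfix]
          · rcases hedge i hi with h | h
            · exact absurd h hfix
            · rw [ee, if_neg hfix, if_pos h, if_neg hfix]
        · rw [if_neg (fun h => hedge h.2.1)]
          push_neg at hedge
          obtain ⟨i, hiI, hi1, hi2⟩ := hedge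
          refine Finset.prod_eq_zero hiI ?_
          rw [ee, if_neg hi1, if_neg hi2]
    · rw [if_neg (fun hc : Cond I (1, g) => h3 hc.2.2),
        if_neg (fun h => h3 fun a ha => h.1 a ha)]
  · rw [if_neg hσ1]
    by_cases hcond : Cond I (σ, g)
    · rw [if_pos hcond, if_neg (fun h => hσ1 h.1)]
    · rw [if_neg hcond]

open Classical in
lemma sum_good :
    ∑ p ∈ (Finset.univ.filter (fun p : Equiv.Perm (Fin n) × (Fin n → Fin n) => Cond I p)).filter
      (fun p => p.1 = 1 ∧ ¬(badSet p.2).Nonempty), Wt E I p = Ynum E I := by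
  classical
  rw [Finset.sum_filter, Finset.sum_filter, Fintype.sum_prod_type]
  have hstep : ∀ σ : Equiv.Perm (Fin n), ∀ g : Fin n → Fin n,
      (if Cond I (σ, g) then
        (if σ = 1 ∧ ¬(badSet g).Nonempty then Wt E I (σ, g) else 0) else 0)
      = if σ = 1 then
          (if (∀ i, i ∉ I → g i = i) ∧ (∀ i ∈ I, g i = i ∨ E i (g i)) ∧ IsAcyclicOn I g then
            ∏ i ∈ I, if g i = i then X (Sum.inl i) else X (Sum.inr (g i))
          else 0)
        else 0 := fun σ g => pair_term_eq σ g
  calc ∑ σ : Equiv.Perm (Fin n), ∑ g : Fin n → Fin n,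
        (if Cond I (σ, g) then
          (if (σ, g).1 = 1 ∧ ¬(badSet (σ, g).2).Nonempty then Wt E I (σ, g) else 0) else 0)
      = ∑ σ : Equiv.Perm (Fin n), ∑ g : Fin n → Fin n,
        (if σ = 1 then
          (if (∀ i, i ∉ I → g i = i) ∧ (∀ i ∈ I, g i = i ∨ E i (g i)) ∧ IsAcyclicOn I g then
            ∏ i ∈ I, if g i = i then X (Sum.inl i) else X (Sum.inr (g i))
          else 0)
        else 0) := by
        refine Finset.sum_congr rfl fun σ _ => Finset.sum_congr rfl fun g _ => hstep σ g
    _ = ∑ σ : Equiv.Perm (Fin n),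
        (if σ = 1 then
          (∑ g : Fin n → Fin n,
            if (∀ i, i ∉ I → g i = i) ∧ (∀ i ∈ I, g i = i ∨ E i (g i)) ∧ IsAcyclicOn I g then
              ∏ i ∈ I, if g i = i then X (Sum.inl i) else X (Sum.inr (g i))
            else 0)
        else 0) := by
        refine Finset.sum_congr rfl fun σ _ => ?_
        by_cases hσ1 : σ = 1
        · rw [if_pos hσ1]
          exact Finset.sum_congr rfl fun g _ => by rw [if_pos hσ1]
        · rw [if_neg hσ1]
          exact Finset.sum_eq_zero fun g _ => by rw [if_neg hσ1]
    _ = Ynum E I := by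
        rw [Finset.sum_ite_eq' Finset.univ (1 : Equiv.Perm (Fin n)),
          if_pos (Finset.mem_univ _), Ynum]

open Classical in
theorem Ynum_eq_det (hE : ∀ i, ¬ E i i) : (Nmat E I).det = Ynum E I := by
  classical
  rw [det_Nmat_eq_sum_Wt hE]
  have h1 : ∑ p : Equiv.Perm (Fin n) × (Fin n → Fin n), Wt E I p
      = ∑ p ∈ Finset.univ.filter (fun p : Equiv.Perm (Fin n) × (Fin n → Fin n) => Cond I p),
        Wt E I p := by
    refine (Finset.sum_filter_of_ne fun p _ hW => ?_).symm
    by_contra hc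
    rw [Wt, if_neg hc] at hW
    exact hW rfl
  rw [h1, ← Finset.sum_filter_add_sum_filter_not
    (Finset.univ.filter (fun p : Equiv.Perm (Fin n) × (Fin n → Fin n) => Cond I p))
    (fun p => p.1 = 1 ∧ ¬(badSet p.2).Nonempty), sum_good, sum_bad, add_zero]

end MainSum

section Assembly

variable {E : Fin n → Fin n → Prop} {I : Finset (Fin n)}

lemma Ynum_singleton (hE : ∀ a, ¬ E a a) (i : Fin n) : Ynum E {i} = DD E i := by
  classical
  rw [← sum_ee E i (hE i), Ynum]
  have hsub : (Finset.univ.image (fun j : Fin n => Function.update id i j))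
      ⊆ Finset.univ := Finset.subset_univ _
  rw [← Finset.sum_subset hsub ?vanish]
  case vanish =>
    intro f _ hf
    rw [if_neg]
    rintro ⟨h1, -, -⟩
    refine hf (Finset.mem_image.mpr ⟨f i, Finset.mem_univ _, ?_⟩)
    funext a
    by_cases ha : a = i
    · subst ha; rw [Function.update_self]
    · rw [Function.update_of_ne ha, id]
      exact (h1 a (by simp [ha])).symm
  rw [Finset.sum_image ?inj]
  case inj =>
    intro x _ y _ hxy
    have := congrFun hxy i
    simpa only [Function.update_self] using this
  refine Finset.sum_congr rfl fun j _ => ?_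
  set f := Function.update id i j with hfdef
  have hf_i : f i = j := Function.update_self i j id
  have hf_ne : ∀ a, a ≠ i → f a = a := fun a ha => Function.update_of_ne ha j id
  have hc1 : ∀ a, a ∉ ({i} : Finset (Fin n)) → f a = a := by
    intro a ha
    exact hf_ne a (by simpa using ha)
  have hacyc : IsAcyclicOn {i} f := by
    intro a ha k hk hiter hper
    have ha' : a = i := by simpa using ha
    rw [ha'] at hper ⊢
    by_cases hji : j = i
    · rw [hf_i, hji]
    · exfalso
      have hiter1 : ∀ s : ℕ, 0 < s → f^[s] i = j := by
        intro s hs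
        induction s with
        | zero => omega
        | succ s ih =>
          rcases Nat.eq_zero_or_pos s with hs0 | hs0
          · subst hs0; simpa using hf_i
          · rw [Function.iterate_succ_apply', ih hs0]
            exact hf_ne j hji
      rw [hiter1 k hk] at hper
      exact hji hper
  by_cases hji : j = i
  · have hcl2 : ∀ a ∈ ({i} : Finset (Fin n)), f a = a ∨ E a (f a) := by
      intro a ha
      have ha' : a = i := by simpa using ha
      rw [ha']
      exact Or.inl (by rw [hf_i, hji])
    rw [if_pos ⟨hc1, hcl2, hacyc⟩, Finset.prod_singleton, if_pos (by rw [hf_i, hji]),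
      ee, if_pos hji]
  · by_cases hEij : E i j
    · have hcl2 : ∀ a ∈ ({i} : Finset (Fin n)), f a = a ∨ E a (f a) := by
        intro a ha
        have ha' : a = i := by simpa using ha
        rw [ha']
        exact Or.inr (by rw [hf_i]; exact hEij)
      rw [if_pos ⟨hc1, hcl2, hacyc⟩, Finset.prod_singleton,
        if_neg (by rw [hf_i]; exact hji), ee, if_neg hji, if_pos hEij, hf_i]
    · have hncl : ¬ ((∀ a, a ∉ ({i} : Finset (Fin n)) → f a = a)
          ∧ (∀ a ∈ ({i} : Finset (Fin n)), f a = a ∨ E a (f a)) ∧ IsAcyclicOn {i} f) := by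
        rintro ⟨-, h2, -⟩
        rcases h2 i (Finset.mem_singleton_self i) with h | h
        · rw [hf_i] at h; exact hji h
        · rw [hf_i] at h; exact hEij h
      rw [if_neg hncl, ee, if_neg hji, if_neg hEij]

lemma XX_ne_zero (i : Fin n) : XX i ≠ 0 := by
  rw [XX]
  have hinj : Function.Injective (algebraMap (MvPolynomial (Fin n ⊕ Fin n) ℤ) (Kn n)) :=
    IsFractionRing.injective _ _
  exact (map_ne_zero_iff _ hinj).mpr (MvPolynomial.X_ne_zero _)

open Classical in
lemma det_submatrix_Nmat :
    ((Nmat E I).submatrix (fun a : {x // x ∈ I} => (a : Fin n))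
      (fun a : {x // x ∈ I} => (a : Fin n))).det = (Nmat E I).det := by
  classical
  let e := Equiv.sumCompl (fun x : Fin n => x ∈ I)
  have hblocks : (Nmat E I).submatrix e e
      = Matrix.fromBlocks
          ((Nmat E I).submatrix (fun a : {x // x ∈ I} => (a : Fin n))
            (fun a : {x // x ∈ I} => (a : Fin n)))
          0 0 (1 : Matrix {x // x ∉ I} {x // x ∉ I} (Rn n)) := by
    refine Matrix.ext fun a b => ?_
    cases a with
    | inl a =>
      cases b with
      | inl b => rfl
      | inr b =>
        show Nmat E I a.1 b.1 = 0
        rw [Nmat]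
        simp only [Matrix.of_apply]
        rw [if_neg (fun h : a.1 = b.1 => b.2 (by rw [← h]; exact a.2)),
          if_neg (fun h => b.2 h.2.1)]
    | inr a =>
      cases b with
      | inl b =>
        show Nmat E I a.1 b.1 = 0
        rw [Nmat]
        simp only [Matrix.of_apply]
        rw [if_neg (fun h : a.1 = b.1 => a.2 (by rw [h]; exact b.2)),
          if_neg (fun h => a.2 h.1)]
      | inr b =>
        show Nmat E I a.1 b.1 = (1 : Matrix {x // x ∉ I} {x // x ∉ I} (Rn n)) a b
        rw [Nmat]
        simp only [Matrix.of_apply]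
        by_cases hab : a.1 = b.1
        · rw [if_pos hab, if_neg a.2, show a = b from Subtype.ext hab, Matrix.one_apply_eq]
        · rw [if_neg hab, if_neg (fun h => a.2 h.1),
            Matrix.one_apply_ne (fun h => hab (congrArg Subtype.val h))]
  calc ((Nmat E I).submatrix _ _).det
      = ((Nmat E I).submatrix e e).det := by
        rw [hblocks, Matrix.det_fromBlocks_zero₂₁, Matrix.det_one, mul_one]
    _ = (Nmat E I).det := Matrix.det_submatrix_equiv_self e _

end Assembly

/-- `Y_I` equals the principal minor `det 𝒴_I` of the matrix `𝒴`. -/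
theorem stmt8 (n : ℕ) (E : Fin n → Fin n → Prop) (hE : ∀ i, ¬ E i i)
    (I : Finset (Fin n)) (hI : I.Nonempty) :
    YY E I = Matrix.det (Matrix.of fun a b : {x // x ∈ I} => Ymat E a.1 b.1) := by
  classical
  have hmat : (Matrix.of fun a b : {x // x ∈ I} => Ymat E a.1 b.1)
      = ((Nmat E I).submatrix (fun a : {x // x ∈ I} => (a : Fin n))
          (fun a : {x // x ∈ I} => (a : Fin n))).map
            (algebraMap (MvPolynomial (Fin n ⊕ Fin n) ℤ) (Kn n))
        * Matrix.diagonal (fun b : {x // x ∈ I} => (XX b.1)⁻¹) := by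
    refine Matrix.ext fun a b => ?_
    rw [Matrix.mul_diagonal]
    show Ymat E a.1 b.1
      = algebraMap (MvPolynomial (Fin n ⊕ Fin n) ℤ) (Kn n) (Nmat E I a.1 b.1) * (XX b.1)⁻¹
    rw [Ymat, Nmat]
    simp only [Matrix.of_apply]
    by_cases hab : a.1 = b.1
    · rw [if_pos hab, if_pos hab, if_pos a.2, YY, Ynum_singleton hE,
        Finset.prod_singleton, div_eq_mul_inv, ← hab]
    · rw [if_neg hab, if_neg hab]
      by_cases hEab : E a.1 b.1
      · rw [if_pos hEab, if_pos ⟨a.2, b.2, hEab⟩, map_neg]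
        have hXX : (algebraMap (MvPolynomial (Fin n ⊕ Fin n) ℤ) (Kn n)) (X (Sum.inr b.1))
            = XX b.1 := rfl
        rw [hXX]
        field_simp
        rw [div_self (XX_ne_zero b.1)]
      · rw [if_neg hEab, if_neg (fun h => hEab h.2.2), map_zero, zero_mul]
  rw [hmat, Matrix.det_mul, Matrix.det_diagonal, ← RingHom.mapMatrix_apply,
    ← RingHom.map_det, det_submatrix_Nmat, Ynum_eq_det hE,
    Finset.prod_inv_distrib, Finset.prod_coe_sort I (fun i => XX i), YY,
    div_eq_mul_inv]
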